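/- Let X be a countably infinite set. The lexicographic composition L_E preserves path independence over C^{sv-res} × C^{pi} (that is, L_E(C1,C2) is path independent whenever C1 is a single-valued responsive choice function and C2 is a path independent choice function) if and only if there exists an exclusion function E' that is threshold-linear with cardinal reuse such that E(∅) = E'(∅) and E({x}) = E'({x}) for every x ∈ X. -/

import Mathlib

/-! Common definitions: choice functions on a countably infinite set of items,
lexicographic composition subject to an exclusion function, and the various
properties from the paper. Items form a type `X`; finite subsets of `X` are
`Finset X`; set functions are maps `Finset X → Set X`. -/

open scoped Classical

variable {X : Type*}

/-- A choice function selects a subset of its input. -/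
def IsChoice (C : Finset X → Finset X) : Prop := ∀ Y, C Y ⊆ Y

/-- Lexicographic composition of `C1` and `C2` subject to the exclusion
function `E`:  `Y ↦ C1(Y) ∪ C2(Y \ E(C1(Y)))`. -/
noncomputable def lexComp (E : Finset X → Set X) (C1 C2 : Finset X → Finset X) :
    Finset X → Finset X :=
  fun Y => C1 Y ∪ C2 (Y.filter (fun y => y ∉ E (C1 Y)))

/-- Path independence: `C(Y ∪ Y') = C(C(Y) ∪ C(Y'))`. -/
def PathIndependent (C : Finset X → Finset X) : Prop :=
  ∀ Y Y' : Finset X, C (Y ∪ Y') = C (C Y ∪ C Y')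

/-- Substitutes: the rejection function is monotone. -/
def Substitutes (C : Finset X → Finset X) : Prop :=
  ∀ Y Y' : Finset X, Y ⊆ Y' → Y \ C Y ⊆ Y' \ C Y'

/-- Size monotonicity (law of aggregate demand). -/
def SizeMonotonic (C : Finset X → Finset X) : Prop :=
  ∀ Y Y' : Finset X, Y ⊆ Y' → (C Y).card ≤ (C Y').card

/-- Consistency: `C(Y') ⊆ Y ⊆ Y'` implies `C(Y) = C(Y')`. -/
def Consistent (C : Finset X → Finset X) : Prop :=
  ∀ Y Y' : Finset X, C Y' ⊆ Y → Y ⊆ Y' → C Y = C Y'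

/-- The `q` highest-ranked acceptable elements of `Y`, with respect to a linear
order `r` on `X ∪ {∅}` (modelled as `Option X`, `none` playing the role of the
outside option `∅`): `y` is chosen iff `y ≻ ∅` and fewer than `q` acceptable
elements of `Y` are ranked strictly above `y`. -/
noncomputable def topChoice (r : LinearOrder (Option X)) (q : ℕ) (Y : Finset X) : Finset X :=
  Y.filter (fun y => r.lt none (some y) ∧
    (Y.filter (fun z => r.lt none (some z) ∧ r.lt (some y) (some z))).card < q)

/-- `C` is responsive to the linear order `r` on `X ∪ {∅}` and quota `q`. -/
def ResponsiveWith (r : LinearOrder (Option X)) (q : ℕ) (C : Finset X → Finset X) : Prop :=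
  ∀ Y : Finset X, C Y = topChoice r q Y

/-- Responsive choice functions (the class `C^res`). -/
def Responsive (C : Finset X → Finset X) : Prop :=
  ∃ (r : LinearOrder (Option X)) (q : ℕ), ResponsiveWith r q C

/-- Single-valued responsive choice functions (the class `C^{sv-res}`): quota 1. -/
def SVResponsive (C : Finset X → Finset X) : Prop :=
  ∃ r : LinearOrder (Option X), ResponsiveWith r 1 C

/-- `E` is threshold-linear with cardinal reuse with respect to the parameters
`t ∈ ℕ ∪ {0,∞}`, `K ⊆ X` and the chain `∅ = T^0 ⊆ T^1 ⊆ ⋯ ⊆ T^t ⊆ X \ K`: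
for every finite `Z`, if `|Z| < t` then `E(Z) = (Z \ T^{|Z|}) ∪ K`, and
otherwise `G_E(Z) = E(Z) ∪ Z = X`. -/
def TLCRWith (E : Finset X → Set X) (t : ℕ∞) (K : Set X) (T : ℕ → Set X) : Prop :=
  T 0 = ∅ ∧ (∀ n : ℕ, (n : ℕ∞) < t → T n ⊆ T (n + 1)) ∧
  (∀ n : ℕ, (n : ℕ∞) ≤ t → T n ⊆ Kᶜ) ∧
  ∀ Z : Finset X,
    ((Z.card : ℕ∞) < t → E Z = ((Z : Set X) \ T Z.card) ∪ K) ∧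
    (¬ (Z.card : ℕ∞) < t → E Z ∪ (Z : Set X) = Set.univ)

/-- `E` is threshold-linear with cardinal reuse (for some parameters). -/
def TLCR (E : Finset X → Set X) : Prop :=
  ∃ (t : ℕ∞) (K : Set X) (T : ℕ → Set X), TLCRWith E t K T

/-- A dilation `D` is threshold-linear (with threshold `t`), where `K = D(∅)`:
`D(Z) = Z ∪ K` when `|Z| < t`, and `D(Z) = X` otherwise. -/
def ThresholdLinear (D : Finset X → Set X) : Prop :=
  ∃ t : ℕ∞, ∀ Z : Finset X,
    ((Z.card : ℕ∞) < t → D Z = (Z : Set X) ∪ D ∅) ∧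
    (¬ (Z.card : ℕ∞) < t → D Z = Set.univ)

/-- A set function `F` (valued inside its argument) is cardinal-linear:
there is a weakly increasing sequence `∅ = T^0 ⊆ T^1 ⊆ ⋯` with
`F(Z) = Z ∩ T^{|Z|}` for every finite `Z`. -/
def CardinalLinear (F : Finset X → Set X) : Prop :=
  ∃ T : ℕ → Set X, T 0 = ∅ ∧ Monotone T ∧
    ∀ Z : Finset X, F Z = (Z : Set X) ∩ T Z.card

section Equiv

variable (s : Setoid X)

/-- A finite set is feasible if it contains at most one element of each
equivalence class. -/
def Feasible (Z : Finset X) : Prop :=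
  ∀ x ∈ Z, ∀ z ∈ Z, x ≠ z → ¬ s.r x z

/-- A choice function is many-to-one if it always selects a feasible set. -/
def ManyToOne (C : Finset X → Finset X) : Prop :=
  ∀ Y : Finset X, Feasible s (C Y)

/-- `I_Z`: the union of the equivalence classes of the members of `Z`. -/
def IClass (Z : Finset X) : Set X := {y | ∃ x ∈ Z, s.r y x}

/-- `E` is equivalence-excluding: `Z ∪ E(Z) ⊇ I_Z` for every feasible `Z`. -/
def EquivExcluding (E : Finset X → Set X) : Prop :=
  ∀ Z : Finset X, Feasible s Z → IClass s Z ⊆ (Z : Set X) ∪ E Z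

/-- `Cbar` completes `C`: whenever `Cbar(Y)` is feasible, `Cbar(Y) = C(Y)`. -/
def Completes (Cbar C : Finset X → Finset X) : Prop :=
  ∀ Y : Finset X, Feasible s (Cbar Y) → Cbar Y = C Y

/-- `E` is many-to-one threshold-linear with cardinal reuse with the parameters
`t`, `K`, `{T^n}`: the displayed condition holds for every *feasible* `Z`:
if `Z ∪ K ≠ X` and `|Z| < t` then `E(Z) = (Z \ T^{|Z|}) ∪ K`, and otherwise
`G_E(Z) = X`. -/
def MtoTLCRWith (E : Finset X → Set X) (t : ℕ∞) (K : Set X) (T : ℕ → Set X) : Prop :=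
  T 0 = ∅ ∧ (∀ n : ℕ, (n : ℕ∞) < t → T n ⊆ T (n + 1)) ∧
  (∀ n : ℕ, (n : ℕ∞) ≤ t → T n ⊆ Kᶜ) ∧
  ∀ Z : Finset X, Feasible s Z →
    (((Z : Set X) ∪ K ≠ Set.univ ∧ (Z.card : ℕ∞) < t) →
      E Z = ((Z : Set X) \ T Z.card) ∪ K) ∧
    (¬ ((Z : Set X) ∪ K ≠ Set.univ ∧ (Z.card : ℕ∞) < t) →
      E Z ∪ (Z : Set X) = Set.univ)

end Equiv
section Aux
variable {X : Type*}

/-- idempotence of path independent choice functions -/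
theorem PathIndependent.idem {C : Finset X → Finset X} (h : PathIndependent C)
    (S : Finset X) : C (C S) = C S := by
  have := h S S
  simpa using this.symm

theorem PathIndependent.replaceL {C : Finset X → Finset X} (h : PathIndependent C)
    (S T : Finset X) : C (C S ∪ T) = C (S ∪ T) := by
  calc C (C S ∪ T) = C (C (C S) ∪ C T) := h (C S) T
    _ = C (C S ∪ C T) := by rw [h.idem]
    _ = C (S ∪ T) := (h S T).symm

theorem PathIndependent.replaceR {C : Finset X → Finset X} (h : PathIndependent C)
    (S T : Finset X) : C (T ∪ C S) = C (T ∪ S) := by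
  rw [Finset.union_comm T (C S), Finset.union_comm T S]; exact h.replaceL S T

end Aux
section Top1
variable {X : Type*}

theorem mem_topChoice_one {r : LinearOrder (Option X)} {Y : Finset X} {y : X} :
    y ∈ topChoice r 1 Y ↔ y ∈ Y ∧ r.lt none (some y) ∧
      ∀ z ∈ Y, r.lt none (some z) → ¬ r.lt (some y) (some z) := by
  unfold topChoice
  simp only [Finset.mem_filter, Nat.lt_one_iff, Finset.card_eq_zero,
    Finset.filter_eq_empty_iff]
  constructor
  · rintro ⟨h1, h2, h3⟩
    exact ⟨h1, h2, fun z hz hacc hlt => h3 hz ⟨hacc, hlt⟩⟩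
  · rintro ⟨h1, h2, h3⟩
    exact ⟨h1, h2, fun {z} hz hc => h3 z hz hc.1 hc.2⟩

theorem topChoice_one_subset {r : LinearOrder (Option X)} (Y : Finset X) :
    topChoice r 1 Y ⊆ Y := Finset.filter_subset _ _

theorem topChoice_one_eq_singleton {r : LinearOrder (Option X)} {Y : Finset X} {m : X}
    (hm : m ∈ Y) (hacc : r.lt none (some m))
    (hmax : ∀ z ∈ Y, r.lt none (some z) → r.le (some z) (some m)) :
    topChoice r 1 Y = {m} := by
  letI := r
  ext y
  rw [mem_topChoice_one, Finset.mem_singleton]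
  constructor
  · rintro ⟨hy, hyacc, hmaxy⟩
    have h1 : ¬ ((some y : Option X) < some m) := hmaxy m hm hacc
    have h2 : (some y : Option X) ≤ some m := hmax y hy hyacc
    have : (some y : Option X) = some m := le_antisymm h2 (not_lt.mp h1)
    exact Option.some.inj this
  · rintro rfl
    exact ⟨hm, hacc, fun z hz hzacc => not_lt.mpr (hmax z hz hzacc)⟩

theorem topChoice_one_eq_empty {r : LinearOrder (Option X)} {Y : Finset X}
    (h : ∀ z ∈ Y, ¬ r.lt none (some z)) :
    topChoice r 1 Y = ∅ := by
  ext y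
  rw [mem_topChoice_one]
  simp only [Finset.notMem_empty, iff_false]
  rintro ⟨hy, hacc, -⟩
  exact h y hy hacc

/-- Dichotomy for quota-one responsive choice. -/
theorem topChoice_one_cases (r : LinearOrder (Option X)) (Y : Finset X) :
    (topChoice r 1 Y = ∅ ∧ ∀ z ∈ Y, ¬ r.lt none (some z)) ∨
    (∃ m ∈ Y, r.lt none (some m) ∧
      (∀ z ∈ Y, r.lt none (some z) → r.le (some z) (some m)) ∧
      topChoice r 1 Y = {m}) := by
  letI := r
  by_cases h : ∀ z ∈ Y, ¬ r.lt none (some z)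
  · exact Or.inl ⟨topChoice_one_eq_empty h, h⟩
  · right
    push_neg at h
    obtain ⟨z0, hz0, hz0acc⟩ := h
    have hne : (Y.filter fun z => r.lt none (some z)).Nonempty :=
      ⟨z0, Finset.mem_filter.mpr ⟨hz0, hz0acc⟩⟩
    obtain ⟨m, hmmem, hmax⟩ := Finset.exists_max_image _ (fun y => (some y : Option X)) hne
    rw [Finset.mem_filter] at hmmem
    refine ⟨m, hmmem.1, hmmem.2, fun z hz hzacc => ?_, ?_⟩
    · exact hmax z (Finset.mem_filter.mpr ⟨hz, hzacc⟩)
    · exact topChoice_one_eq_singleton hmmem.1 hmmem.2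
        (fun z hz hzacc => hmax z (Finset.mem_filter.mpr ⟨hz, hzacc⟩))

end Top1
section Preserve
variable {X : Type*} {E : Finset X → Set X} {C1 C2 : Finset X → Finset X}

theorem lexComp_isChoice (hC1 : IsChoice C1) (hC2 : IsChoice C2) :
    IsChoice (lexComp E C1 C2) := by
  intro Y y hy
  rcases Finset.mem_union.mp hy with h | h
  · exact hC1 Y h
  · exact Finset.mem_of_mem_filter y (hC2 _ h)

theorem lexComp_of_empty {Y : Finset X} (h : C1 Y = ∅) :
    lexComp E C1 C2 Y = C2 (Y.filter (fun y => y ∉ E ∅)) := by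
  unfold lexComp
  rw [h, Finset.empty_union]

theorem lexComp_of_singleton {Y : Finset X} {M : X} (h : C1 Y = {M}) :
    lexComp E C1 C2 Y = {M} ∪ C2 (Y.filter (fun y => y ∉ E {M})) := by
  unfold lexComp
  rw [h]

/-- the case where `Y ∪ Y'` contains no acceptable element. -/
theorem lex_none_case (hC2 : IsChoice C2) (r : LinearOrder (Option X))
    (hr : ∀ Y, C1 Y = topChoice r 1 Y) (hPI : PathIndependent C2) {Y Y' : Finset X}
    (h : ∀ z ∈ Y ∪ Y', ¬ r.lt none (some z)) :
    lexComp E C1 C2 (Y ∪ Y') =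
      lexComp E C1 C2 (lexComp E C1 C2 Y ∪ lexComp E C1 C2 Y') := by
  have hY : C1 Y = ∅ := by
    rw [hr]; exact topChoice_one_eq_empty (fun z hz => h z (Finset.mem_union_left _ hz))
  have hY' : C1 Y' = ∅ := by
    rw [hr]; exact topChoice_one_eq_empty (fun z hz => h z (Finset.mem_union_right _ hz))
  have hU : C1 (Y ∪ Y') = ∅ := by
    rw [hr]; exact topChoice_one_eq_empty h
  have hLY := lexComp_of_empty (E := E) (C2 := C2) hY
  have hLY' := lexComp_of_empty (E := E) (C2 := C2) hY'
  set fY := Y.filter (fun y => y ∉ E ∅) with hfY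
  set fY' := Y'.filter (fun y => y ∉ E ∅) with hfY'
  have hsub : C2 fY ∪ C2 fY' ⊆ Y ∪ Y' := by
    apply Finset.union_subset
    · exact (hC2 fY).trans ((Finset.filter_subset _ _).trans Finset.subset_union_left)
    · exact (hC2 fY').trans ((Finset.filter_subset _ _).trans Finset.subset_union_right)
  have hU2 : C1 (C2 fY ∪ C2 fY') = ∅ := by
    rw [hr]; exact topChoice_one_eq_empty (fun z hz => h z (hsub hz))
  rw [lexComp_of_empty hU, hLY, hLY', lexComp_of_empty hU2]
  have hfid : (C2 fY ∪ C2 fY').filter (fun y => y ∉ E ∅) = C2 fY ∪ C2 fY' := by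
    apply Finset.filter_true_of_mem
    intro y hy
    rcases Finset.mem_union.mp hy with h | h
    · exact (Finset.mem_filter.mp (hC2 _ h)).2
    · exact (Finset.mem_filter.mp (hC2 _ h)).2
  rw [hfid]
  calc C2 ((Y ∪ Y').filter (fun y => y ∉ E ∅)) = C2 (fY ∪ fY') := by
        rw [Finset.filter_union]
    _ = C2 (C2 fY ∪ fY') := (hPI.replaceL fY fY').symm
    _ = C2 (C2 fY ∪ C2 fY') := (hPI.replaceR fY' (C2 fY)).symm

/-- Preservation, case `t ≤ 1`: every singleton excludes everything else. -/
theorem preserves_of_A (hA : ∀ x y : X, y ≠ x → y ∈ E {x})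
    (hC1 : IsChoice C1) (hC2 : IsChoice C2) (r : LinearOrder (Option X))
    (hr : ∀ Y, C1 Y = topChoice r 1 Y) (hPI : PathIndependent C2) :
    PathIndependent (lexComp E C1 C2) := by
  have key : ∀ (Z : Finset X) (M : X), C1 Z = {M} → lexComp E C1 C2 Z = {M} := by
    intro Z M h
    rw [lexComp_of_singleton h]
    apply Finset.union_eq_left.mpr
    refine (hC2 _).trans ?_
    intro y hy
    have := Finset.mem_filter.mp hy
    rw [Finset.mem_singleton]
    by_contra hne
    exact this.2 (hA M y hne)
  intro Y Y'
  rcases topChoice_one_cases r (Y ∪ Y') with ⟨h0, hnone⟩ | ⟨M, hMU, hMacc, hMmax, hMtop⟩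
  · exact lex_none_case hC2 r hr hPI hnone
  · have hCU : C1 (Y ∪ Y') = {M} := by rw [hr]; exact hMtop
    rw [key _ _ hCU]
    have hML : M ∈ lexComp E C1 C2 Y ∪ lexComp E C1 C2 Y' := by
      rcases Finset.mem_union.mp hMU with h | h
      · have : C1 Y = {M} := by
          rw [hr]
          exact topChoice_one_eq_singleton h hMacc
            (fun z hz => hMmax z (Finset.mem_union_left _ hz))
        apply Finset.mem_union_left
        rw [key _ _ this]; exact Finset.mem_singleton_self M
      · have : C1 Y' = {M} := by
          rw [hr]
          exact topChoice_one_eq_singleton h hMacc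
            (fun z hz => hMmax z (Finset.mem_union_right _ hz))
        apply Finset.mem_union_right
        rw [key _ _ this]; exact Finset.mem_singleton_self M
    have hsub : lexComp E C1 C2 Y ∪ lexComp E C1 C2 Y' ⊆ Y ∪ Y' := by
      apply Finset.union_subset
      · exact (lexComp_isChoice hC1 hC2 Y).trans Finset.subset_union_left
      · exact (lexComp_isChoice hC1 hC2 Y').trans Finset.subset_union_right
    have : C1 (lexComp E C1 C2 Y ∪ lexComp E C1 C2 Y') = {M} := by
      rw [hr]
      exact topChoice_one_eq_singleton hML hMacc (fun z hz => hMmax z (hsub hz))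
    rw [key _ _ this]

end Preserve
section PreserveB
variable {X : Type*} {E : Finset X → Set X} {C1 C2 : Finset X → Finset X}

/-- Auxiliary: case B, acceptable top `M` of the union belongs to `Y`. -/
theorem preserves_of_B_aux (hb1 : ∀ x : X, E ∅ ⊆ E {x})
    (hb2 : ∀ x : X, E {x} ⊆ E ∅ ∪ {x})
    (hC1 : IsChoice C1) (hC2 : IsChoice C2) (r : LinearOrder (Option X))
    (hr : ∀ Y, C1 Y = topChoice r 1 Y) (hPI : PathIndependent C2)
    {Y Y' : Finset X} {M : X} (hMacc : r.lt none (some M))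
    (hMmax : ∀ z ∈ Y ∪ Y', r.lt none (some z) → r.le (some z) (some M))
    (hMY : M ∈ Y) :
    lexComp E C1 C2 (Y ∪ Y') =
      lexComp E C1 C2 (lexComp E C1 C2 Y ∪ lexComp E C1 C2 Y') := by
  letI := r
  have hCY : C1 Y = {M} := by
    rw [hr]
    exact topChoice_one_eq_singleton hMY hMacc
      (fun z hz => hMmax z (Finset.mem_union_left _ hz))
  have hCU : C1 (Y ∪ Y') = {M} := by
    rw [hr]
    exact topChoice_one_eq_singleton (Finset.mem_union_left _ hMY) hMacc hMmax
  have hLY : lexComp E C1 C2 Y = {M} ∪ C2 (Y.filter (fun y => y ∉ E {M})) :=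
    lexComp_of_singleton hCY
  have hML : M ∈ lexComp E C1 C2 Y := by
    rw [hLY]; exact Finset.mem_union_left _ (Finset.mem_singleton_self M)
  have hsubU : lexComp E C1 C2 Y ∪ lexComp E C1 C2 Y' ⊆ Y ∪ Y' := by
    apply Finset.union_subset
    · exact (lexComp_isChoice hC1 hC2 Y).trans Finset.subset_union_left
    · exact (lexComp_isChoice hC1 hC2 Y').trans Finset.subset_union_right
  have hCU2 : C1 (lexComp E C1 C2 Y ∪ lexComp E C1 C2 Y') = {M} := by
    rw [hr]
    exact topChoice_one_eq_singleton (Finset.mem_union_left _ hML) hMacc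
      (fun z hz => hMmax z (hsubU hz))
  rw [lexComp_of_singleton hCU, lexComp_of_singleton hCU2]
  congr 1
  have hfixY : (C2 (Y.filter (fun y => y ∉ E {M}))).filter (fun y => y ∉ E {M})
      = C2 (Y.filter (fun y => y ∉ E {M})) :=
    Finset.filter_true_of_mem (fun y hy => (Finset.mem_filter.mp (hC2 _ hy)).2)
  have habsorbY : ({M} : Finset X).filter (fun y => y ∉ E {M})
      ∪ Y.filter (fun y => y ∉ E {M}) = Y.filter (fun y => y ∉ E {M}) :=
    Finset.union_eq_right.mpr
      (Finset.filter_subset_filter _ (Finset.singleton_subset_iff.mpr hMY))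
  rcases topChoice_one_cases r Y' with ⟨h0, hnone⟩ | ⟨m', hm'Y', hm'acc, hm'max, hm'top⟩
  · -- Y' has no acceptable element
    have hCY' : C1 Y' = ∅ := by rw [hr]; exact h0
    have hMnotY' : M ∉ Y' := fun h => hnone M h hMacc
    have hfY' : Y'.filter (fun y => y ∉ E ∅) = Y'.filter (fun y => y ∉ E {M}) := by
      apply Finset.filter_congr
      intro y hy
      constructor
      · intro h hc
        rcases hb2 M hc with h' | h'
        · exact h h'
        · rw [Set.mem_singleton_iff] at h'; subst h'; exact hMnotY' hy
      · exact fun h hc => h (hb1 M hc)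
    have hLY' : lexComp E C1 C2 Y' = C2 (Y'.filter (fun y => y ∉ E {M})) := by
      rw [lexComp_of_empty hCY', hfY']
    have hfixY' : (C2 (Y'.filter (fun y => y ∉ E {M}))).filter (fun y => y ∉ E {M})
        = C2 (Y'.filter (fun y => y ∉ E {M})) :=
      Finset.filter_true_of_mem (fun y hy => (Finset.mem_filter.mp (hC2 _ hy)).2)
    rw [hLY, hLY']
    simp only [Finset.filter_union]
    rw [hfixY, hfixY']
    have rearr : ({M} : Finset X).filter (fun y => y ∉ E {M})
        ∪ C2 (Y.filter (fun y => y ∉ E {M})) ∪ C2 (Y'.filter (fun y => y ∉ E {M}))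
        = (({M} : Finset X).filter (fun y => y ∉ E {M})
            ∪ C2 (Y'.filter (fun y => y ∉ E {M}))) ∪ C2 (Y.filter (fun y => y ∉ E {M})) := by
      ext z; simp only [Finset.mem_union]; tauto
    rw [rearr, hPI.replaceR]
    have rearr2 : (({M} : Finset X).filter (fun y => y ∉ E {M})
        ∪ C2 (Y'.filter (fun y => y ∉ E {M}))) ∪ Y.filter (fun y => y ∉ E {M})
        = (({M} : Finset X).filter (fun y => y ∉ E {M}) ∪ Y.filter (fun y => y ∉ E {M}))
            ∪ C2 (Y'.filter (fun y => y ∉ E {M})) := by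
      ext z; simp only [Finset.mem_union]; tauto
    rw [rearr2, hPI.replaceR, habsorbY]
  · -- Y' has top acceptable element m'
    have hCY' : C1 Y' = {m'} := by rw [hr]; exact hm'top
    have hLY' : lexComp E C1 C2 Y' = {m'} ∪ C2 (Y'.filter (fun y => y ∉ E {m'})) :=
      lexComp_of_singleton hCY'
    by_cases hmm : m' = M
    · subst hmm
      have hfixY' : (C2 (Y'.filter (fun y => y ∉ E {m'}))).filter (fun y => y ∉ E {m'})
          = C2 (Y'.filter (fun y => y ∉ E {m'})) :=
        Finset.filter_true_of_mem (fun y hy => (Finset.mem_filter.mp (hC2 _ hy)).2)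
      rw [hLY, hLY']
      simp only [Finset.filter_union]
      rw [hfixY, hfixY']
      have rearr : ({m'} : Finset X).filter (fun y => y ∉ E {m'})
          ∪ C2 (Y.filter (fun y => y ∉ E {m'}))
          ∪ (({m'} : Finset X).filter (fun y => y ∉ E {m'})
              ∪ C2 (Y'.filter (fun y => y ∉ E {m'})))
          = (({m'} : Finset X).filter (fun y => y ∉ E {m'})
              ∪ C2 (Y'.filter (fun y => y ∉ E {m'}))) ∪ C2 (Y.filter (fun y => y ∉ E {m'})) := by
        ext z; simp only [Finset.mem_union]; tauto
      rw [rearr, hPI.replaceR]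
      have rearr2 : (({m'} : Finset X).filter (fun y => y ∉ E {m'})
          ∪ C2 (Y'.filter (fun y => y ∉ E {m'}))) ∪ Y.filter (fun y => y ∉ E {m'})
          = (({m'} : Finset X).filter (fun y => y ∉ E {m'}) ∪ Y.filter (fun y => y ∉ E {m'}))
              ∪ C2 (Y'.filter (fun y => y ∉ E {m'})) := by
        ext z; simp only [Finset.mem_union]; tauto
      rw [rearr2, hPI.replaceR, habsorbY]
    · -- m' ≠ M, hence M ∉ Y'
      have hMnotY' : M ∉ Y' := by
        intro h
        have h1 : r.le (some M) (some m') := hm'max M h hMacc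
        have h2 : r.le (some m') (some M) :=
          hMmax m' (Finset.mem_union_right _ hm'Y') hm'acc
        exact hmm (Option.some.inj (le_antisymm h2 h1))
      have hy'mem : ∀ y ∈ Y', (y ∉ E {M}) ↔ (y ∉ E ∅) := by
        intro y hy
        constructor
        · exact fun h hc => h (hb1 M hc)
        · intro h hc
          rcases hb2 M hc with h' | h'
          · exact h h'
          · rw [Set.mem_singleton_iff] at h'; subst h'; exact hMnotY' hy
      have hfixY' : (C2 (Y'.filter (fun y => y ∉ E {m'}))).filter (fun y => y ∉ E {M})
          = C2 (Y'.filter (fun y => y ∉ E {m'})) := by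
        apply Finset.filter_true_of_mem
        intro y hy
        have hmem := Finset.mem_filter.mp (hC2 _ hy)
        intro hc
        rcases hb2 M hc with h' | h'
        · exact hmem.2 (hb1 m' h')
        · rw [Set.mem_singleton_iff] at h'; subst h'; exact hMnotY' hmem.1
      have hm'filt : ({m'} : Finset X).filter (fun y => y ∉ E {M})
          = ({m'} : Finset X).filter (fun y => y ∉ E ∅) := by
        apply Finset.filter_congr
        intro y hy
        rw [Finset.mem_singleton] at hy
        rw [hy]
        exact hy'mem m' hm'Y'
      have hkey : ({m'} : Finset X).filter (fun y => y ∉ E ∅)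
          ∪ Y'.filter (fun y => y ∉ E {m'}) = Y'.filter (fun y => y ∉ E ∅) := by
        ext y
        simp only [Finset.mem_union, Finset.mem_filter, Finset.mem_singleton]
        constructor
        · rintro (⟨rfl, h⟩ | ⟨hy, h⟩)
          · exact ⟨hm'Y', h⟩
          · exact ⟨hy, fun hc => h (hb1 m' hc)⟩
        · rintro ⟨hy, h⟩
          by_cases hym : y = m'
          · exact Or.inl ⟨hym, h⟩
          · refine Or.inr ⟨hy, fun hc => ?_⟩
            rcases hb2 m' hc with h' | h'
            · exact h h'
            · rw [Set.mem_singleton_iff] at h'; exact hym h'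
      have hfY'M : Y'.filter (fun y => y ∉ E {M}) = Y'.filter (fun y => y ∉ E ∅) :=
        Finset.filter_congr hy'mem
      rw [hLY, hLY']
      simp only [Finset.filter_union]
      rw [hfixY, hfixY', hm'filt, hfY'M]
      have rearr : ({M} : Finset X).filter (fun y => y ∉ E {M})
          ∪ C2 (Y.filter (fun y => y ∉ E {M}))
          ∪ (({m'} : Finset X).filter (fun y => y ∉ E ∅)
              ∪ C2 (Y'.filter (fun y => y ∉ E {m'})))
          = ((({M} : Finset X).filter (fun y => y ∉ E {M})
              ∪ ({m'} : Finset X).filter (fun y => y ∉ E ∅))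
              ∪ C2 (Y'.filter (fun y => y ∉ E {m'}))) ∪ C2 (Y.filter (fun y => y ∉ E {M})) := by
        ext z; simp only [Finset.mem_union]; tauto
      rw [rearr, hPI.replaceR]
      have rearr2 : ((({M} : Finset X).filter (fun y => y ∉ E {M})
          ∪ ({m'} : Finset X).filter (fun y => y ∉ E ∅))
          ∪ C2 (Y'.filter (fun y => y ∉ E {m'}))) ∪ Y.filter (fun y => y ∉ E {M})
          = ((({M} : Finset X).filter (fun y => y ∉ E {M}) ∪ Y.filter (fun y => y ∉ E {M}))
              ∪ ({m'} : Finset X).filter (fun y => y ∉ E ∅))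
              ∪ C2 (Y'.filter (fun y => y ∉ E {m'})) := by
        ext z; simp only [Finset.mem_union]; tauto
      rw [rearr2, hPI.replaceR, habsorbY]
      rw [Finset.union_assoc, hkey]

/-- Preservation, case `t ≥ 2`. -/
theorem preserves_of_B (hb1 : ∀ x : X, E ∅ ⊆ E {x})
    (hb2 : ∀ x : X, E {x} ⊆ E ∅ ∪ {x})
    (hC1 : IsChoice C1) (hC2 : IsChoice C2) (r : LinearOrder (Option X))
    (hr : ∀ Y, C1 Y = topChoice r 1 Y) (hPI : PathIndependent C2) :
    PathIndependent (lexComp E C1 C2) := by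
  intro Y Y'
  rcases topChoice_one_cases r (Y ∪ Y') with ⟨h0, hnone⟩ | ⟨M, hMU, hMacc, hMmax, hMtop⟩
  · exact lex_none_case hC2 r hr hPI hnone
  · rcases Finset.mem_union.mp hMU with hMY | hMY'
    · exact preserves_of_B_aux hb1 hb2 hC1 hC2 r hr hPI hMacc hMmax hMY
    · rw [Finset.union_comm Y Y',
        Finset.union_comm (lexComp E C1 C2 Y) (lexComp E C1 C2 Y')]
      exact preserves_of_B_aux hb1 hb2 hC1 hC2 r hr hPI hMacc
        (by rw [Finset.union_comm]; exact hMmax) hMY'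

end PreserveB
section Machinery
variable {X : Type*}

/-- Build a linear order on `Option X` from an injective rank function. -/
noncomputable def mkLO (f : Option X → ℤ) (hf : Function.Injective f) :
    LinearOrder (Option X) where
  le a b := f a ≤ f b
  lt a b := f a < f b
  le_refl a := le_refl (f a)
  le_trans a b c h1 h2 := by
    exact le_trans (show f a ≤ f b from h1) (show f b ≤ f c from h2)
  le_antisymm a b h1 h2 := by
    exact hf (le_antisymm (show f a ≤ f b from h1) (show f b ≤ f a from h2))
  le_total a b := Int.le_total (f a) (f b)
  lt_iff_le_not_ge a b := lt_iff_le_not_ge (a := f a) (b := f b)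
  toDecidableLE a b := inferInstanceAs (Decidable (f a ≤ f b))

theorem mkLO_lt (f : Option X → ℤ) (hf : Function.Injective f) (a b : Option X) :
    (mkLO f hf).lt a b ↔ f a < f b := by rfl

theorem mkLO_le (f : Option X → ℤ) (hf : Function.Injective f) (a b : Option X) :
    (mkLO f hf).le a b ↔ f a ≤ f b := by rfl

/-- rank function: `m` on top (rank 2), then `m'` (rank 1), then the outside
option (rank 0), and everybody else unacceptable. -/
noncomputable def rk (g : X → ℕ) (m m' : X) : Option X → ℤ
  | none => 0
  | some x => if x = m then 2 else if x = m' then 1 else -(g x : ℤ) - 1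

theorem rk_none (g : X → ℕ) (m m' : X) : rk g m m' none = 0 := rfl

theorem rk_some (g : X → ℕ) (m m' x : X) :
    rk g m m' (some x) = if x = m then 2 else if x = m' then 1 else -(g x : ℤ) - 1 := rfl

theorem rk_inj {g : X → ℕ} (hg : Function.Injective g) (m m' : X) :
    Function.Injective (rk g m m') := by
  intro a b h
  match a, b with
  | none, none => rfl
  | none, some x =>
      rw [rk_none, rk_some] at h
      split_ifs at h <;> omega
  | some x, none =>
      rw [rk_none, rk_some] at h
      split_ifs at h <;> omega
  | some x, some y =>
      rw [rk_some, rk_some] at h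
      split_ifs at h with h1 h2 h3 h4 h5 h6 h7 h8 h9 <;>
        first
          | (congr 1; omega)
          | omega
          | (congr 1; subst_vars; rfl)
          | (congr 1; exact hg (by omega))

theorem pi_id : PathIndependent (fun S : Finset X => S) := fun _ _ => rfl

theorem isChoice_id : IsChoice (fun S : Finset X => S) := fun _ => subset_rfl

/-- choice function selecting only `b` (if present). -/
noncomputable def onlyC (b : X) : Finset X → Finset X :=
  fun S => S.filter (fun z => z = b)

theorem isChoice_onlyC (b : X) : IsChoice (onlyC (X := X) b) :=
  fun _ => Finset.filter_subset _ _

theorem pi_onlyC (b : X) : PathIndependent (onlyC (X := X) b) := by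
  intro Y Y'
  unfold onlyC
  simp [Finset.filter_union, Finset.filter_filter]

/-- choice function selecting `a` if present, else `b` if present. -/
noncomputable def pairC (a b : X) : Finset X → Finset X :=
  fun S => if a ∈ S then {a} else S.filter (fun z => z = b)

theorem isChoice_pairC (a b : X) : IsChoice (pairC (X := X) a b) := by
  intro S
  unfold pairC
  split_ifs with h
  · exact Finset.singleton_subset_iff.mpr h
  · exact Finset.filter_subset _ _

theorem pi_pairC (a b : X) : PathIndependent (pairC (X := X) a b) := by
  intro Y Y'
  unfold pairC
  by_cases hY : a ∈ Y
  · have h1 : a ∈ Y ∪ Y' := Finset.mem_union_left _ hY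
    rw [if_pos hY, if_pos h1]
    have h2 : a ∈ ({a} : Finset X) ∪ (if a ∈ Y' then {a} else Y'.filter (fun z => z = b)) :=
      Finset.mem_union_left _ (Finset.mem_singleton_self a)
    rw [if_pos h2]
  · by_cases hY' : a ∈ Y'
    · have h1 : a ∈ Y ∪ Y' := Finset.mem_union_right _ hY'
      rw [if_pos h1, if_neg hY, if_pos hY']
      have h2 : a ∈ Y.filter (fun z => z = b) ∪ ({a} : Finset X) :=
        Finset.mem_union_right _ (Finset.mem_singleton_self a)
      rw [if_pos h2]
    · have h1 : a ∉ Y ∪ Y' := fun h => (Finset.mem_union.mp h).elim hY hY'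
      rw [if_neg h1, if_neg hY, if_neg hY']
      have h2 : a ∉ Y.filter (fun z => z = b) ∪ Y'.filter (fun z => z = b) := by
        intro h
        rcases Finset.mem_union.mp h with h | h
        · exact hY (Finset.mem_of_mem_filter a h)
        · exact hY' (Finset.mem_of_mem_filter a h)
      rw [if_neg h2]
      simp [Finset.filter_union, Finset.filter_filter]
end Machinery
section Violations
variable {X : Type*} [Countable X] [Infinite X] {E : Finset X → Set X}
set_option linter.unusedSectionVars false

theorem rk_self (g : X → ℕ) (m m' : X) : rk g m m' (some m) = 2 := by
  rw [rk_some, if_pos rfl]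

theorem rk_second (g : X → ℕ) {m m' : X} (h : m' ≠ m) : rk g m m' (some m') = 1 := by
  rw [rk_some, if_neg h, if_pos rfl]

theorem rk_other (g : X → ℕ) {m m' x : X} (h1 : x ≠ m) (h2 : x ≠ m') :
    rk g m m' (some x) = -(g x : ℤ) - 1 := by
  rw [rk_some, if_neg h1, if_neg h2]

/-- From preservation: an element of `K = E ∅` other than `m` must be in `E {m}`. -/
theorem lem_F1
    (hP : ∀ C1 C2 : Finset X → Finset X, IsChoice C1 → IsChoice C2 →
      SVResponsive C1 → PathIndependent C2 → PathIndependent (lexComp E C1 C2))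
    {m y : X} (hyK : y ∈ E ∅) (hyE : y ∉ E {m}) (hym : y ≠ m) : False := by
  obtain ⟨g, hg⟩ := Countable.exists_injective_nat X
  set r := mkLO (rk g m m) (rk_inj hg m m) with hrdef
  set C1 := topChoice r 1 with hC1def
  have hchoice1 : IsChoice C1 := fun Y => topChoice_one_subset Y
  have hsv : SVResponsive C1 := ⟨r, fun Y => rfl⟩
  have hPI := hP C1 (fun S => S) hchoice1 isChoice_id hsv pi_id
  have haccm : r.lt none (some m) := by
    rw [hrdef, mkLO_lt, rk_none, rk_self]; norm_num
  have hnacc : ∀ z : X, z ≠ m → ¬ r.lt none (some z) := by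
    intro z hz
    rw [hrdef, mkLO_lt, rk_none, rk_some, if_neg hz, if_neg hz]
    omega
  have hC1y : C1 {y} = ∅ := by
    apply topChoice_one_eq_empty
    intro z hz
    rw [Finset.mem_singleton] at hz
    rw [hz]; exact hnacc y hym
  have hC1m : C1 {m} = {m} := by
    apply topChoice_one_eq_singleton (Finset.mem_singleton_self m) haccm
    intro z hz hzacc
    rw [Finset.mem_singleton] at hz
    rw [hz]
  have hC1u : C1 ({y} ∪ {m}) = {m} := by
    apply topChoice_one_eq_singleton (Finset.mem_union_right _ (Finset.mem_singleton_self m))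
      haccm
    intro z hz hzacc
    rcases Finset.mem_union.mp hz with h | h <;> rw [Finset.mem_singleton] at h
    · rw [h] at hzacc; exact absurd hzacc (hnacc y hym)
    · rw [h]
  have hLy : lexComp E C1 (fun S => S) {y} = ∅ := by
    rw [lexComp_of_empty hC1y]
    simp [Finset.filter_singleton, hyK]
  have hLm : lexComp E C1 (fun S => S) {m} = {m} := by
    rw [lexComp_of_singleton hC1m]
    exact Finset.union_eq_left.mpr (Finset.filter_subset _ _)
  have hEq := hPI {y} {m}
  rw [hLy, hLm, Finset.empty_union, hLm, lexComp_of_singleton hC1u] at hEq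
  have hymem : y ∈ ({m} : Finset X) ∪ Finset.filter (fun z => z ∉ E {m}) ({y} ∪ {m}) := by
    apply Finset.mem_union_right
    exact Finset.mem_filter.mpr
      ⟨Finset.mem_union_left _ (Finset.mem_singleton_self y), hyE⟩
  rw [hEq] at hymem
  exact hym (Finset.mem_singleton.mp hymem)

end Violations
section Violations2
variable {X : Type*} [Countable X] [Infinite X] {E : Finset X → Set X}
set_option linter.unusedSectionVars false

/-- helper: if the filtered set is inside `{M}`, the lex choice is `{M}`. -/
theorem lex_eq_singleton {C1 C2 : Finset X → Finset X} (hC2 : IsChoice C2) {Z : Finset X}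
    {M : X} (h : C1 Z = {M})
    (hZ : Z.filter (fun z => z ∉ E {M}) ⊆ {M}) : lexComp E C1 C2 Z = {M} := by
  rw [lexComp_of_singleton h]
  exact Finset.union_eq_left.mpr ((hC2 _).trans hZ)

/-- N0 : an element outside `K ∪ {m}` excluded by `{m}` forces `{m}` to
exclude everything but itself and that element. -/
theorem lem_N0
    (hP : ∀ C1 C2 : Finset X → Finset X, IsChoice C1 → IsChoice C2 →
      SVResponsive C1 → PathIndependent C2 → PathIndependent (lexComp E C1 C2))
    {m y x : X} (hyE : y ∈ E {m}) (hyK : y ∉ E ∅) (hym : y ≠ m)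
    (hxE : x ∉ E {m}) (hxm : x ≠ m) (hxy : x ≠ y) : False := by
  obtain ⟨g, hg⟩ := Countable.exists_injective_nat X
  set r := mkLO (rk g m m) (rk_inj hg m m) with hrdef
  set C1 := topChoice r 1 with hC1def
  have hchoice1 : IsChoice C1 := fun Y => topChoice_one_subset Y
  have hsv : SVResponsive C1 := ⟨r, fun Y => rfl⟩
  have hPI := hP C1 (pairC y x) hchoice1 (isChoice_pairC y x) hsv (pi_pairC y x)
  have haccm : r.lt none (some m) := by
    rw [hrdef, mkLO_lt, rk_none, rk_self]; norm_num
  have hnacc : ∀ z : X, z ≠ m → ¬ r.lt none (some z) := by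
    intro z hz
    rw [hrdef, mkLO_lt, rk_none, rk_some, if_neg hz, if_neg hz]
    omega
  have hC1m : C1 {m} = {m} := by
    apply topChoice_one_eq_singleton (Finset.mem_singleton_self m) haccm
    intro z hz hzacc
    rw [Finset.mem_singleton] at hz
    rw [hz]
  have hC1yx : C1 ({y} ∪ {x}) = ∅ := by
    apply topChoice_one_eq_empty
    intro z hz
    rcases Finset.mem_union.mp hz with h | h <;> rw [Finset.mem_singleton] at h <;>
      rw [h]
    · exact hnacc y hym
    · exact hnacc x hxm
  have hC1u : C1 ({m} ∪ ({y} ∪ {x})) = {m} := by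
    apply topChoice_one_eq_singleton (Finset.mem_union_left _ (Finset.mem_singleton_self m))
      haccm
    intro z hz hzacc
    rcases Finset.mem_union.mp hz with h | h
    · rw [Finset.mem_singleton] at h; rw [h]
    · exfalso
      rcases Finset.mem_union.mp h with h' | h' <;> rw [Finset.mem_singleton] at h' <;>
        rw [h'] at hzacc
      · exact hnacc y hym hzacc
      · exact hnacc x hxm hzacc
  have hC1my : C1 ({m} ∪ {y}) = {m} := by
    apply topChoice_one_eq_singleton (Finset.mem_union_left _ (Finset.mem_singleton_self m))
      haccm
    intro z hz hzacc
    rcases Finset.mem_union.mp hz with h | h <;> rw [Finset.mem_singleton] at h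
    · rw [h]
    · exfalso; rw [h] at hzacc; exact hnacc y hym hzacc
  -- evaluations
  have hLm : lexComp E C1 (pairC y x) {m} = {m} :=
    lex_eq_singleton (isChoice_pairC y x) hC1m (Finset.filter_subset _ _)
  have hLyx : lexComp E C1 (pairC y x) ({y} ∪ {x}) = {y} := by
    rw [lexComp_of_empty hC1yx]
    have hymem : y ∈ ((({y} : Finset X) ∪ {x}).filter (fun z => z ∉ E ∅)) :=
      Finset.mem_filter.mpr ⟨Finset.mem_union_left _ (Finset.mem_singleton_self y), hyK⟩
    unfold pairC
    rw [if_pos hymem]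
  have hLmy : lexComp E C1 (pairC y x) ({m} ∪ {y}) = {m} := by
    apply lex_eq_singleton (isChoice_pairC y x) hC1my
    intro z hz
    have := Finset.mem_filter.mp hz
    rcases Finset.mem_union.mp this.1 with h | h
    · exact h
    · exfalso; rw [Finset.mem_singleton] at h; rw [h] at this; exact this.2 hyE
  have hEq := hPI {m} ({y} ∪ {x})
  rw [hLm, hLyx, hLmy] at hEq
  -- but x is chosen from the union
  have hxmem : x ∈ lexComp E C1 (pairC y x) ({m} ∪ ({y} ∪ {x})) := by
    rw [lexComp_of_singleton hC1u]
    apply Finset.mem_union_right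
    have hyout : y ∉ ((({m} : Finset X) ∪ ({y} ∪ {x})).filter (fun z => z ∉ E {m})) := by
      intro h
      exact (Finset.mem_filter.mp h).2 hyE
    have hxin : x ∈ ((({m} : Finset X) ∪ ({y} ∪ {x})).filter (fun z => z ∉ E {m})) :=
      Finset.mem_filter.mpr
        ⟨Finset.mem_union_right _ (Finset.mem_union_right _ (Finset.mem_singleton_self x)),
          hxE⟩
    unfold pairC
    rw [if_neg hyout]
    exact Finset.mem_filter.mpr ⟨hxin, rfl⟩
  rw [hEq] at hxmem
  exact hxm (Finset.mem_singleton.mp hxmem)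

/-- N2 : elements (other than the two tops) excluded by the second-ranked
singleton must be excluded by the top singleton. -/
theorem lem_N2
    (hP : ∀ C1 C2 : Finset X → Finset X, IsChoice C1 → IsChoice C2 →
      SVResponsive C1 → PathIndependent C2 → PathIndependent (lexComp E C1 C2))
    {m m' y : X} (hmm' : m' ≠ m) (hym : y ≠ m) (hym' : y ≠ m')
    (hyE' : y ∈ E {m'}) (hyE : y ∉ E {m}) : False := by
  obtain ⟨g, hg⟩ := Countable.exists_injective_nat X
  set r := mkLO (rk g m m') (rk_inj hg m m') with hrdef
  set C1 := topChoice r 1 with hC1def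
  have hchoice1 : IsChoice C1 := fun Y => topChoice_one_subset Y
  have hsv : SVResponsive C1 := ⟨r, fun Y => rfl⟩
  have hPI := hP C1 (onlyC y) hchoice1 (isChoice_onlyC y) hsv (pi_onlyC y)
  have haccm : r.lt none (some m) := by
    rw [hrdef, mkLO_lt, rk_none, rk_self]; norm_num
  have haccm' : r.lt none (some m') := by
    rw [hrdef, mkLO_lt, rk_none, rk_second g hmm']; norm_num
  have hnaccy : ¬ r.lt none (some y) := by
    rw [hrdef, mkLO_lt, rk_none, rk_other g hym hym']
    omega
  have hlem' : r.le (some m') (some m) := by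
    rw [hrdef, mkLO_le, rk_self, rk_second g hmm']; norm_num
  have hC1m : C1 {m} = {m} := by
    apply topChoice_one_eq_singleton (Finset.mem_singleton_self m) haccm
    intro z hz hzacc
    rw [Finset.mem_singleton] at hz
    rw [hz]
  have hC1m'y : C1 ({m'} ∪ {y}) = {m'} := by
    apply topChoice_one_eq_singleton (Finset.mem_union_left _ (Finset.mem_singleton_self m'))
      haccm'
    intro z hz hzacc
    rcases Finset.mem_union.mp hz with h | h <;> rw [Finset.mem_singleton] at h
    · rw [h]
    · exfalso; rw [h] at hzacc; exact hnaccy hzacc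
  have hC1u : C1 ({m} ∪ ({m'} ∪ {y})) = {m} := by
    apply topChoice_one_eq_singleton (Finset.mem_union_left _ (Finset.mem_singleton_self m))
      haccm
    intro z hz hzacc
    rcases Finset.mem_union.mp hz with h | h
    · rw [Finset.mem_singleton] at h; rw [h]
    · rcases Finset.mem_union.mp h with h' | h' <;> rw [Finset.mem_singleton] at h' <;>
        rw [h']
      · exact hlem'
      · exfalso; rw [h'] at hzacc; exact hnaccy hzacc
  have hC1mm' : C1 ({m} ∪ {m'}) = {m} := by
    apply topChoice_one_eq_singleton (Finset.mem_union_left _ (Finset.mem_singleton_self m))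
      haccm
    intro z hz hzacc
    rcases Finset.mem_union.mp hz with h | h <;> rw [Finset.mem_singleton] at h <;> rw [h]
    · exact hlem'
  -- evaluations
  have hLm : lexComp E C1 (onlyC y) {m} = {m} :=
    lex_eq_singleton (isChoice_onlyC y) hC1m (Finset.filter_subset _ _)
  have hLm'y : lexComp E C1 (onlyC y) ({m'} ∪ {y}) = {m'} := by
    apply lex_eq_singleton (isChoice_onlyC y) hC1m'y
    intro z hz
    have := Finset.mem_filter.mp hz
    rcases Finset.mem_union.mp this.1 with h | h
    · exact h
    · exfalso; rw [Finset.mem_singleton] at h; rw [h] at this; exact this.2 hyE'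
  have hLmm' : lexComp E C1 (onlyC y) ({m} ∪ {m'}) = {m} := by
    rw [lexComp_of_singleton hC1mm']
    have hempty : onlyC y ((({m} ∪ {m'}) : Finset X).filter (fun z => z ∉ E {m})) = ∅ := by
      ext z
      unfold onlyC
      simp only [Finset.mem_filter, Finset.notMem_empty, iff_false, not_and]
      rintro ⟨hz1, -⟩ rfl
      rcases Finset.mem_union.mp hz1 with h | h <;> rw [Finset.mem_singleton] at h
      · exact hym h
      · exact hym' h
    rw [hempty, Finset.union_empty]
  have hEq := hPI {m} ({m'} ∪ {y})
  rw [hLm, hLm'y, hLmm'] at hEq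
  have hymem : y ∈ lexComp E C1 (onlyC y) ({m} ∪ ({m'} ∪ {y})) := by
    rw [lexComp_of_singleton hC1u]
    apply Finset.mem_union_right
    unfold onlyC
    refine Finset.mem_filter.mpr ⟨Finset.mem_filter.mpr ⟨?_, hyE⟩, rfl⟩
    exact Finset.mem_union_right _ (Finset.mem_union_right _ (Finset.mem_singleton_self y))
  rw [hEq] at hymem
  exact hym (Finset.mem_singleton.mp hymem)

/-- N4 : if the second-ranked element is excluded by the top but can be
re-chosen after itself, path independence fails. -/
theorem lem_N4
    (hP : ∀ C1 C2 : Finset X → Finset X, IsChoice C1 → IsChoice C2 →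
      SVResponsive C1 → PathIndependent C2 → PathIndependent (lexComp E C1 C2))
    {m m' y : X} (hmm' : m' ≠ m) (hym : y ≠ m) (hym' : y ≠ m')
    (hm'E : m' ∈ E {m}) (hyE : y ∉ E {m})
    (hm'E' : m' ∉ E {m'}) (hyE' : y ∉ E {m'}) : False := by
  obtain ⟨g, hg⟩ := Countable.exists_injective_nat X
  set r := mkLO (rk g m m') (rk_inj hg m m') with hrdef
  set C1 := topChoice r 1 with hC1def
  have hchoice1 : IsChoice C1 := fun Y => topChoice_one_subset Y
  have hsv : SVResponsive C1 := ⟨r, fun Y => rfl⟩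
  have hPI := hP C1 (pairC m' y) hchoice1 (isChoice_pairC m' y) hsv (pi_pairC m' y)
  have haccm : r.lt none (some m) := by
    rw [hrdef, mkLO_lt, rk_none, rk_self]; norm_num
  have haccm' : r.lt none (some m') := by
    rw [hrdef, mkLO_lt, rk_none, rk_second g hmm']; norm_num
  have hnaccy : ¬ r.lt none (some y) := by
    rw [hrdef, mkLO_lt, rk_none, rk_other g hym hym']
    omega
  have hlem' : r.le (some m') (some m) := by
    rw [hrdef, mkLO_le, rk_self, rk_second g hmm']; norm_num
  have hC1m : C1 {m} = {m} := by
    apply topChoice_one_eq_singleton (Finset.mem_singleton_self m) haccm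
    intro z hz hzacc
    rw [Finset.mem_singleton] at hz
    rw [hz]
  have hC1m'y : C1 ({m'} ∪ {y}) = {m'} := by
    apply topChoice_one_eq_singleton (Finset.mem_union_left _ (Finset.mem_singleton_self m'))
      haccm'
    intro z hz hzacc
    rcases Finset.mem_union.mp hz with h | h <;> rw [Finset.mem_singleton] at h
    · rw [h]
    · exfalso; rw [h] at hzacc; exact hnaccy hzacc
  have hC1u : C1 ({m} ∪ ({m'} ∪ {y})) = {m} := by
    apply topChoice_one_eq_singleton (Finset.mem_union_left _ (Finset.mem_singleton_self m))
      haccm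
    intro z hz hzacc
    rcases Finset.mem_union.mp hz with h | h
    · rw [Finset.mem_singleton] at h; rw [h]
    · rcases Finset.mem_union.mp h with h' | h' <;> rw [Finset.mem_singleton] at h' <;>
        rw [h']
      · exact hlem'
      · exfalso; rw [h'] at hzacc; exact hnaccy hzacc
  have hC1mm' : C1 ({m} ∪ {m'}) = {m} := by
    apply topChoice_one_eq_singleton (Finset.mem_union_left _ (Finset.mem_singleton_self m))
      haccm
    intro z hz hzacc
    rcases Finset.mem_union.mp hz with h | h <;> rw [Finset.mem_singleton] at h <;> rw [h]
    · exact hlem'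
  -- evaluations
  have hLm : lexComp E C1 (pairC m' y) {m} = {m} :=
    lex_eq_singleton (isChoice_pairC m' y) hC1m (Finset.filter_subset _ _)
  have hLm'y : lexComp E C1 (pairC m' y) ({m'} ∪ {y}) = {m'} := by
    rw [lexComp_of_singleton hC1m'y]
    have hm'mem : m' ∈ (({m'} ∪ {y}) : Finset X).filter (fun z => z ∉ E {m'}) :=
      Finset.mem_filter.mpr ⟨Finset.mem_union_left _ (Finset.mem_singleton_self m'), hm'E'⟩
    unfold pairC
    rw [if_pos hm'mem, Finset.union_self]
  have hLmm' : lexComp E C1 (pairC m' y) ({m} ∪ {m'}) = {m} := by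
    apply lex_eq_singleton (isChoice_pairC m' y) hC1mm'
    intro z hz
    have := Finset.mem_filter.mp hz
    rcases Finset.mem_union.mp this.1 with h | h
    · exact h
    · exfalso; rw [Finset.mem_singleton] at h; rw [h] at this; exact this.2 hm'E
  have hEq := hPI {m} ({m'} ∪ {y})
  rw [hLm, hLm'y, hLmm'] at hEq
  have hymem : y ∈ lexComp E C1 (pairC m' y) ({m} ∪ ({m'} ∪ {y})) := by
    rw [lexComp_of_singleton hC1u]
    apply Finset.mem_union_right
    have hm'out : m' ∉ (({m} ∪ ({m'} ∪ {y})) : Finset X).filter (fun z => z ∉ E {m}) := by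
      intro h
      exact (Finset.mem_filter.mp h).2 hm'E
    have hyin : y ∈ (({m} ∪ ({m'} ∪ {y})) : Finset X).filter (fun z => z ∉ E {m}) :=
      Finset.mem_filter.mpr
        ⟨Finset.mem_union_right _ (Finset.mem_union_right _ (Finset.mem_singleton_self y)),
          hyE⟩
    unfold pairC
    rw [if_neg hm'out]
    exact Finset.mem_filter.mpr ⟨hyin, rfl⟩
  rw [hEq] at hymem
  exact hym (Finset.mem_singleton.mp hymem)

end Violations2
section MainB
variable {X : Type*} [Countable X] [Infinite X] {E : Finset X → Set X}
set_option linter.unusedSectionVars false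

theorem main_B
    (hP : ∀ C1 C2 : Finset X → Finset X, IsChoice C1 → IsChoice C2 →
      SVResponsive C1 → PathIndependent C2 → PathIndependent (lexComp E C1 C2))
    {a b : X} (hba : b ≠ a) (hbE : b ∉ E {a}) :
    ∀ c : X, (∀ y : X, y ≠ c → (y ∈ E {c} ↔ y ∈ E ∅)) ∧ (c ∈ E ∅ → c ∈ E {c}) := by
  have hbK : b ∉ E ∅ := fun h => lem_F1 hP h hbE hba
  have hEa_sub : ∀ y : X, y ∈ E {a} → y ≠ a → y ∈ E ∅ := by
    intro y hy hya
    by_contra hyK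
    have hby : b ≠ y := fun h => hbE (h ▸ hy)
    exact lem_N0 hP hy hyK hya hbE hba hby
  have hclaim1 : ∀ c y : X, y ≠ c → (y ∈ E {c} ↔ y ∈ E ∅) := by
    intro c y hyc
    constructor
    · intro hyEc
      by_contra hyK
      by_cases hca : c = a
      · exact hyK (hEa_sub y (hca ▸ hyEc) (hca ▸ hyc))
      · by_cases hbc : b = c
        · -- c = b
          subst hbc
          obtain ⟨w, hw⟩ := Infinite.exists_notMem_finset ({a} ∪ {b} ∪ {y} : Finset X)
          have hwa : w ≠ a := by
            intro h; apply hw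
            exact Finset.mem_union_left _ (Finset.mem_union_left _
              (Finset.mem_singleton.mpr h))
          have hwb : w ≠ b := by
            intro h; apply hw
            exact Finset.mem_union_left _ (Finset.mem_union_right _
              (Finset.mem_singleton.mpr h))
          have hwy : w ≠ y := by
            intro h; apply hw
            exact Finset.mem_union_right _ (Finset.mem_singleton.mpr h)
          have hyb : y ≠ b := hyc
          by_cases hyw : y ∈ E {w}
          · have hbEw : b ∈ E {w} := by
              by_contra hbw
              exact lem_N0 hP hyw hyK (fun h => hwy h.symm) hbw
                (fun h => hwb h.symm) (fun h => hyb h.symm)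
            exact lem_N2 hP hwa hba (fun h => hwb h.symm) hbEw hbE
          · exact lem_N2 hP (fun h => hwb h.symm) (fun h => hwy h.symm) hyb hyEc hyw
        · by_cases hbEc : b ∈ E {c}
          · exact lem_N2 hP hca hba hbc hbEc hbE
          · by_cases hby : b = y
            · exact hbEc (hby ▸ hyEc)
            · exact lem_N0 hP hyEc hyK hyc hbEc hbc hby
    · intro hyK
      by_contra hyEc
      exact lem_F1 hP hyK hyEc hyc
  intro c
  refine ⟨hclaim1 c, ?_⟩
  intro hcK
  by_contra hcE
  have hbc : b ≠ c := fun h => hbK (h ▸ hcK)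
  by_cases hca : c = a
  · subst hca
    obtain ⟨u, hu⟩ := Infinite.exists_notMem_finset ({c} ∪ {b} : Finset X)
    have huc : u ≠ c := by
      intro h; apply hu
      exact Finset.mem_union_left _ (Finset.mem_singleton.mpr h)
    have hub : u ≠ b := by
      intro h; apply hu
      exact Finset.mem_union_right _ (Finset.mem_singleton.mpr h)
    have hcEu : c ∈ E {u} := (hclaim1 u c (Ne.symm huc)).mpr hcK
    have hbEu : b ∉ E {u} := fun h => hbK ((hclaim1 u b (Ne.symm hub)).mp h)
    exact lem_N4 hP (Ne.symm huc) (Ne.symm hub) hbc hcEu hbEu hcE hbE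
  · have hcEa : c ∈ E {a} := (hclaim1 a c hca).mpr hcK
    have hbEc : b ∉ E {c} := fun h => hbK ((hclaim1 c b hbc).mp h)
    exact lem_N4 hP hca hba hbc hcEa hbE hcE hbEc

end MainB
/-- **Proposition (sv-res × pi).** `L_E` preserves path independence over
`C^{sv-res} × C^{pi}` iff, on the empty set and all singletons, `E` coincides
with some exclusion function that is threshold-linear with cardinal reuse. -/
theorem lexComp_preserves_pi_over_svres_pi_iff
    {X : Type*} [Countable X] [Infinite X] (E : Finset X → Set X) :
    (∀ C1 C2 : Finset X → Finset X, IsChoice C1 → IsChoice C2 →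
        SVResponsive C1 → PathIndependent C2 →
        PathIndependent (lexComp E C1 C2)) ↔
      ∃ E' : Finset X → Set X, TLCR E' ∧
        E ∅ = E' ∅ ∧ ∀ x : X, E {x} = E' {x} := by
  constructor
  · intro hP
    by_cases hA : ∀ x y : X, y ≠ x → y ∈ E {x}
    · -- threshold t = 1
      refine ⟨fun Z => if Z.card ≤ 1 then E Z else Set.univ,
        ⟨1, E ∅, fun _ => ∅, rfl, fun n _ => subset_rfl,
          fun n _ => Set.empty_subset _, ?_⟩, ?_, ?_⟩
      · intro Z
        dsimp only
        constructor
        · intro h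
          have hcard : Z.card = 0 := by
            have : Z.card < 1 := by exact_mod_cast h
            omega
          have hZempty : Z = ∅ := Finset.card_eq_zero.mp hcard
          subst hZempty
          simp
        · intro h
          have hcard : 1 ≤ Z.card := by
            by_contra hc
            exact h (by exact_mod_cast Nat.lt_one_iff.mpr (by omega))
          by_cases h1 : Z.card = 1
          · obtain ⟨x, rfl⟩ := Finset.card_eq_one.mp h1
            rw [if_pos (by simp)]
            apply Set.eq_univ_iff_forall.mpr
            intro y
            by_cases hyx : y = x
            · exact Set.mem_union_right _ (by simp [hyx])
            · exact Set.mem_union_left _ (hA x y hyx)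
          · rw [if_neg (by omega)]
            simp
      · dsimp only
        rw [if_pos (by simp)]
      · intro x
        dsimp only
        rw [if_pos (by simp)]
    · push_neg at hA
      obtain ⟨a, b, hba, hbE⟩ := hA
      have hB := main_B hP hba hbE
      refine ⟨fun Z => if Z.card < 2 then
          ((Z : Set X) \ (if Z.card = 0 then (∅ : Set X) else {x : X | x ∉ E {x}})) ∪ E ∅
        else Set.univ,
        ⟨2, E ∅, fun n => if n = 0 then (∅ : Set X) else {x : X | x ∉ E {x}},
          if_pos rfl, ?_, ?_, ?_⟩, ?_, ?_⟩
      · intro n _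
        dsimp only
        rw [if_neg (Nat.succ_ne_zero n)]
        by_cases h1 : n = 0
        · rw [if_pos h1]; exact Set.empty_subset _
        · rw [if_neg h1]
      · intro n _
        dsimp only
        split_ifs with h1
        · exact Set.empty_subset _
        · intro x hx
          exact fun hxK => hx ((hB x).2 hxK)
      · intro Z
        dsimp only
        constructor
        · intro h
          rw [if_pos (by exact_mod_cast h)]
        · intro h
          rw [if_neg (by exact_mod_cast h)]
          exact Set.univ_union _
      · dsimp only
        rw [if_pos (by norm_num), if_pos Finset.card_empty]
        simp
      · intro x
        dsimp only
        rw [if_pos (by simp), if_neg (by simp)]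
        ext y
        simp only [Set.mem_union, Set.mem_diff, Finset.coe_singleton,
          Set.mem_singleton_iff, Set.mem_setOf_eq, not_not]
        constructor
        · intro hy
          by_cases hyx : y = x
          · exact Or.inl ⟨hyx, hyx ▸ hy⟩
          · exact Or.inr (((hB x).1 y hyx).mp hy)
        · rintro (⟨rfl, hy⟩ | hyK)
          · exact hy
          · by_cases hyx : y = x
            · exact hyx ▸ ((hB x).2 (hyx ▸ hyK))
            · exact ((hB x).1 y hyx).mpr hyK
  · rintro ⟨E', ⟨t, K', T, hT0, hTmono, hTK, hZ⟩, hE0, hEx⟩ C1 C2 hC1 hC2 hsv hPI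
    obtain ⟨r, hr⟩ := hsv
    by_cases ht : (1 : ℕ∞) < t
    · have h0 : (0 : ℕ∞) < t := lt_trans (by norm_num) ht
      have hK : E ∅ = K' := by
        have h := (hZ ∅).1 (by simpa using h0)
        rw [hE0, h]
        simp [hT0]
      have hx1 : ∀ x : X, E {x} = ((({x} : Finset X) : Set X) \ T 1) ∪ K' := by
        intro x
        have h := (hZ {x}).1 (by simpa using ht)
        rw [hEx x, h, Finset.card_singleton]
      apply preserves_of_B (fun x => ?_) (fun x => ?_) hC1 hC2 r hr hPI
      · rw [hK, hx1 x]
        exact Set.subset_union_right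
      · rw [hK, hx1 x]
        intro y hy
        rcases hy with ⟨hy1, -⟩ | hy2
        · rw [Finset.coe_singleton] at hy1
          exact Set.mem_union_right _ hy1
        · exact Set.mem_union_left _ hy2
    · apply preserves_of_A (fun x y hxy => ?_) hC1 hC2 r hr hPI
      have h := (hZ {x}).2 (by simpa using ht)
      rw [hEx x]
      have hy : y ∈ E' {x} ∪ (({x} : Finset X) : Set X) :=
        h ▸ Set.mem_univ y
      rcases hy with h' | h'
      · exact h'
      · rw [Finset.coe_singleton, Set.mem_singleton_iff] at h'
        exact absurd h' hxy
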